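/- Let n ≥ 1 and let f be a solution of the n×n Pulsar puzzle. Then the top row satisfies the symmetric sum property: for every i with 1 ≤ i ≤ n, f(1,i) + f(1,n+1−i) = n+1. -/

import Mathlib

/-- The circled set `C n` of the `n × n` Pulsar puzzle, as a predicate on cells `(r, c)`
(1-indexed).  `C 1 = {(1,1)}`, and for `n ≥ 2`, a cell `(r,c)` of the grid is circled iff
`r = 1`, or `r ≥ 2`, `c ≥ 2` and `(n - c + 1, r - 1)` is circled in `C (n-1)`. -/
def Circled : ℕ → ℕ × ℕ → Prop
  | 0, _ => False
  | 1, p => p = (1, 1)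
  | (n + 2), (r, c) =>
      1 ≤ r ∧ r ≤ n + 2 ∧ 1 ≤ c ∧ c ≤ n + 2 ∧
        (r = 1 ∨ (2 ≤ r ∧ 2 ≤ c ∧ Circled (n + 1) (n + 2 - c + 1, r - 1)))


open Finset

lemma circled_mem : ∀ n r c, Circled n (r, c) → 1 ≤ r ∧ r ≤ n ∧ 1 ≤ c ∧ c ≤ n
  | 0, r, c, h => h.elim
  | 1, r, c, h => by simp [Circled] at h; omega
  | (n+2), r, c, h => by obtain ⟨h1, h2, h3, h4, _⟩ := h; exact ⟨h1, h2, h3, h4⟩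

lemma circled_top (n c : ℕ) (h1 : 1 ≤ c) (h2 : c ≤ n) (hn : 1 ≤ n) : Circled n (1, c) := by
  match n with
  | 1 => interval_cases c; rfl
  | (m+2) => exact ⟨le_refl 1, by omega, h1, h2, Or.inl rfl⟩

open Classical in
/-- The circled cells as a finset. -/
noncomputable def CFin (n : ℕ) : Finset (ℕ × ℕ) :=
  ((Finset.Icc 1 n) ×ˢ (Finset.Icc 1 n)).filter (fun p => Circled n p)

lemma mem_CFin {n : ℕ} {p : ℕ × ℕ} : p ∈ CFin n ↔ Circled n p := by
  classical
  obtain ⟨r, c⟩ := p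
  simp only [CFin, Finset.mem_filter, Finset.mem_product, Finset.mem_Icc]
  constructor
  · tauto
  · intro h; have := circled_mem n r c h; exact ⟨⟨⟨this.1, this.2.1⟩, this.2.2⟩, h⟩

open Classical in
noncomputable def sCol (n c : ℕ) : ℕ := ((CFin n).filter (fun p => p.2 = c)).card
open Classical in
noncomputable def tRow (n r : ℕ) : ℕ := ((CFin n).filter (fun p => p.1 = r)).card

lemma CFin_one : CFin 1 = {(1,1)} := by
  classical
  ext ⟨r, c⟩
  simp [mem_CFin, Circled, Prod.ext_iff]

lemma sCol_one_one : sCol 1 1 = 1 := by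
  classical
  rw [sCol, CFin_one, Finset.filter_singleton]
  simp
lemma tRow_one_one : tRow 1 1 = 1 := by
  classical
  rw [tRow, CFin_one, Finset.filter_singleton]
  simp

lemma circled_succ_iff {n r c : ℕ} :
    Circled (n+2) (r, c) ↔ (1 ≤ r ∧ r ≤ n + 2 ∧ 1 ≤ c ∧ c ≤ n + 2 ∧
        (r = 1 ∨ (2 ≤ r ∧ 2 ≤ c ∧ Circled (n + 1) (n + 2 - c + 1, r - 1)))) := Iff.rfl

/-- L1 -/
lemma sCol_col1 (n : ℕ) : sCol (n+2) 1 = 1 := by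
  classical
  have : ((CFin (n+2)).filter (fun p => p.2 = 1)) = {((1:ℕ),(1:ℕ))} := by
    ext ⟨r, c⟩
    simp only [Finset.mem_filter, mem_CFin, Finset.mem_singleton, Prod.ext_iff]
    constructor
    · rintro ⟨hc, h2⟩
      rw [circled_succ_iff] at hc
      obtain ⟨a1, a2, a3, a4, a5 | ⟨b1, b2, b3⟩⟩ := hc
      · exact ⟨a5, h2⟩
      · omega
    · rintro ⟨rfl, rfl⟩
      exact ⟨circled_top _ _ le_rfl (by omega) (by omega), rfl⟩
  simp [sCol, this]

/-- L3 -/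
lemma tRow_row1 (n : ℕ) : tRow (n+2) 1 = n+2 := by
  classical
  have : ((CFin (n+2)).filter (fun p => p.1 = 1)) =
      (Finset.Icc 1 (n+2)).image (fun c => ((1:ℕ), c)) := by
    ext ⟨r, c⟩
    simp only [Finset.mem_filter, mem_CFin, Finset.mem_image, Finset.mem_Icc, Prod.ext_iff]
    constructor
    · rintro ⟨hc, rfl⟩
      have := circled_mem _ _ _ hc
      exact ⟨c, ⟨this.2.2.1, this.2.2.2⟩, rfl, rfl⟩
    · rintro ⟨c', ⟨h1, h2⟩, rfl, rfl⟩
      exact ⟨circled_top _ _ h1 h2 (by omega), rfl⟩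
  rw [tRow, this, Finset.card_image_of_injective _ (fun a b h => by simpa using h)]
  simp

lemma tRow_one (n : ℕ) (hn : 1 ≤ n) : tRow n 1 = n := by
  match n with
  | 1 => exact tRow_one_one
  | (m+2) => exact tRow_row1 m

open Finset

/-- L4: row count of `C (n+2)` at row `r ≥ 2` is the column count of `C (n+1)` at `r-1`. -/
lemma tRow_succ (n r : ℕ) (h2 : 2 ≤ r) (h3 : r ≤ n+2) :
    tRow (n+2) r = sCol (n+1) (r-1) := by
  classical
  apply Finset.card_nbij' (i := fun p => (n + 2 - p.2 + 1, p.1 - 1))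
    (j := fun q => (r, n + 2 - q.1 + 1))
  · rintro ⟨p1, p2⟩ hp
    simp only [Finset.mem_coe, Finset.mem_filter, mem_CFin] at hp
    obtain ⟨hc, rfl⟩ := hp
    rw [circled_succ_iff] at hc
    obtain ⟨a1, a2, a3, a4, a5 | ⟨b1, b2, b3⟩⟩ := hc
    · omega
    · exact Finset.mem_filter.mpr ⟨mem_CFin.mpr b3, rfl⟩
  · rintro ⟨a, b⟩ hq
    simp only [Finset.mem_coe, Finset.mem_filter, mem_CFin] at hq
    obtain ⟨hc, rfl⟩ := hq
    have hb := circled_mem _ _ _ hc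
    refine Finset.mem_filter.mpr ⟨mem_CFin.mpr ?_, rfl⟩
    rw [circled_succ_iff]
    refine ⟨by omega, h3, by omega, by omega, Or.inr ⟨h2, by omega, ?_⟩⟩
    have e1 : n + 2 - (n + 2 - a + 1) + 1 = a := by omega
    rw [e1]
    exact hc
  · rintro ⟨p1, p2⟩ hp
    simp only [Finset.mem_coe, Finset.mem_filter, mem_CFin] at hp
    obtain ⟨hc, rfl⟩ := hp
    rw [circled_succ_iff] at hc
    obtain ⟨a1, a2, a3, a4, a5 | ⟨b1, b2, b3⟩⟩ := hc
    · omega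
    · dsimp only
      simp only [Prod.mk.injEq, true_and, and_true]
      omega
  · rintro ⟨a, b⟩ hq
    simp only [Finset.mem_coe, Finset.mem_filter, mem_CFin] at hq
    obtain ⟨hc, rfl⟩ := hq
    have hb := circled_mem _ _ _ hc
    dsimp only
    simp only [Prod.mk.injEq, true_and, and_true]
    omega

/-- L2: column count of `C (n+2)` at column `c ≥ 2`. -/
lemma sCol_succ (n c : ℕ) (h2 : 2 ≤ c) (h3 : c ≤ n+2) :
    sCol (n+2) c = tRow (n+1) (n + 3 - c) + 1 := by
  classical
  have key : ((CFin (n+2)).filter (fun p => p.2 = c)) =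
      insert ((1:ℕ), c) (((CFin (n+2)).filter (fun p => p.2 = c)).filter (fun p => 2 ≤ p.1)) := by
    ext ⟨r, c'⟩
    simp only [Finset.mem_insert, Finset.mem_filter, mem_CFin, Prod.mk.injEq]
    constructor
    · rintro ⟨hc, rfl⟩
      have hb := circled_mem _ _ _ hc
      by_cases hr : r = 1
      · exact Or.inl ⟨hr, rfl⟩
      · exact Or.inr ⟨⟨hc, rfl⟩, by omega⟩
    · rintro (⟨rfl, rfl⟩ | ⟨⟨hc, rfl⟩, _⟩)
      · exact ⟨circled_top _ _ (by omega) h3 (by omega), rfl⟩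
      · exact ⟨hc, rfl⟩
  have hnot : ((1:ℕ), c) ∉ (((CFin (n+2)).filter (fun p => p.2 = c)).filter (fun p => 2 ≤ p.1)) := by
    simp
  have hcard : (((CFin (n+2)).filter (fun p => p.2 = c)).filter (fun p => 2 ≤ p.1)).card
      = tRow (n+1) (n + 3 - c) := by
    apply Finset.card_nbij' (i := fun p => (n + 2 - p.2 + 1, p.1 - 1))
      (j := fun q => (q.2 + 1, c))
    · rintro ⟨p1, p2⟩ hp
      simp only [Finset.mem_coe, Finset.mem_filter, mem_CFin] at hp
      obtain ⟨⟨hc', rfl⟩, hr⟩ := hp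
      rw [circled_succ_iff] at hc'
      obtain ⟨a1, a2, a3, a4, a5 | ⟨b1, b2, b3⟩⟩ := hc'
      · omega
      · refine Finset.mem_filter.mpr ⟨mem_CFin.mpr b3, ?_⟩
        simp only
        omega
    · rintro ⟨a, b⟩ hq
      simp only [Finset.mem_coe, Finset.mem_filter, mem_CFin] at hq
      obtain ⟨hc', rfl⟩ := hq
      have hb := circled_mem _ _ _ hc'
      refine Finset.mem_filter.mpr ⟨Finset.mem_filter.mpr ⟨mem_CFin.mpr ?_, rfl⟩, by
        simp only; omega⟩
      rw [circled_succ_iff]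
      refine ⟨by omega, by omega, by omega, h3, Or.inr ⟨by omega, h2, ?_⟩⟩
      have e1 : n + 2 - c + 1 = n + 3 - c := by omega
      have e2 : b + 1 - 1 = b := by omega
      rw [e1, e2]
      exact hc'
    · rintro ⟨p1, p2⟩ hp
      simp only [Finset.mem_coe, Finset.mem_filter, mem_CFin] at hp
      obtain ⟨⟨hc', rfl⟩, hr⟩ := hp
      dsimp only
      simp only [Prod.mk.injEq, true_and, and_true]
      omega
    · rintro ⟨a, b⟩ hq
      simp only [Finset.mem_coe, Finset.mem_filter, mem_CFin] at hq
      obtain ⟨hc', rfl⟩ := hq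
      have hb := circled_mem _ _ _ hc'
      dsimp only
      simp only [Prod.mk.injEq, true_and, and_true]
      omega
  rw [sCol, key, Finset.card_insert_of_notMem hnot, hcard]

lemma sum_shift (m : ℕ) (F : ℕ → ℕ) :
    ∑ j ∈ Finset.Icc 1 (m+1), F (j+1) = ∑ j ∈ Finset.Icc 2 (m+2), F j := by
  apply Finset.sum_nbij' (i := fun j => j + 1) (j := fun j => j - 1)
  all_goals intro a ha <;> simp only [Finset.mem_Icc] at * <;> try omega

lemma sum_reflect (m : ℕ) (G : ℕ → ℕ) :
    ∑ c ∈ Finset.Icc 2 (m+2), G (m + 3 - c) = ∑ r ∈ Finset.Icc 1 (m+1), G r := by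
  apply Finset.sum_nbij' (i := fun c => m + 3 - c) (j := fun r => m + 3 - r)
  all_goals intro a ha <;> simp only [Finset.mem_Icc] at * <;> try omega

lemma icc_insert_bot (m : ℕ) : Finset.Icc 1 (m+2) = insert 1 (Finset.Icc 2 (m+2)) := by
  ext x; simp only [Finset.mem_Icc, Finset.mem_insert]; omega

lemma perm_sums : ∀ n : ℕ, 1 ≤ n → ∀ F : ℕ → ℕ,
    (∑ c ∈ Finset.Icc 1 n, F (sCol n c) = ∑ j ∈ Finset.Icc 1 n, F j) ∧
    (∑ r ∈ Finset.Icc 1 n, F (tRow n r) = ∑ j ∈ Finset.Icc 1 n, F j) := by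
  intro n
  induction n using Nat.strong_induction_on with
  | _ n IH =>
    match n with
    | 0 => intro h; exact absurd h (by omega)
    | 1 =>
      intro _ F
      constructor <;> simp [sCol_one_one, tRow_one_one]
    | (m+2) =>
      intro _ F
      have IHs := fun F => (IH (m+1) (by omega) (by omega) F).1
      have IHt := fun F => (IH (m+1) (by omega) (by omega) F).2
      have hnm : (1:ℕ) ∉ Finset.Icc 2 (m+2) := by simp
      constructor
      · rw [icc_insert_bot, Finset.sum_insert hnm, Finset.sum_insert hnm, sCol_col1]
        congr 1
        rw [Finset.sum_congr rfl (fun c hc => by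
          rw [sCol_succ m c (Finset.mem_Icc.mp hc).1 (Finset.mem_Icc.mp hc).2])]
        rw [sum_reflect m (fun r => F (tRow (m+1) r + 1)), IHt (fun x => F (x+1)),
          sum_shift m F]
      · have hre : ∑ r ∈ Finset.Icc 2 (m+2), F (sCol (m+1) (r-1))
            = ∑ c ∈ Finset.Icc 1 (m+1), F (sCol (m+1) c) := by
          apply Finset.sum_nbij' (i := fun r => r - 1) (j := fun c => c + 1)
          all_goals intro a ha <;> simp only [Finset.mem_Icc] at * <;> try omega
        have main : ∑ r ∈ Finset.Icc 1 (m+2), F (tRow (m+2) r)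
            = F (m+2) + ∑ j ∈ Finset.Icc 1 (m+1), F j := by
          rw [icc_insert_bot, Finset.sum_insert hnm, tRow_row1]
          rw [Finset.sum_congr rfl (fun r hr => by
            rw [tRow_succ m r (Finset.mem_Icc.mp hr).1 (Finset.mem_Icc.mp hr).2])]
          rw [hre, IHs F]
        rw [main, Finset.sum_Icc_succ_top (by omega : 1 ≤ m + 2) F]
        have e4 : m + 1 + 1 = m + 2 := by omega
        rw [e4]
        omega

lemma pairing : ∀ n : ℕ, 1 ≤ n →
    (∀ c, 1 ≤ c → c ≤ n → sCol n c + sCol n (n+1-c) = n+1) ∧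
    (∀ r, 2 ≤ r → r ≤ n → tRow n r + tRow n (n+2-r) = n) := by
  intro n
  induction n using Nat.strong_induction_on with
  | _ n IH =>
    match n with
    | 0 => intro h; exact absurd h (by omega)
    | 1 =>
      intro _
      refine ⟨fun c h1 h2 => ?_, fun r h1 h2 => by omega⟩
      interval_cases c
      simp [sCol_one_one]
    | (m+2) =>
      intro _
      have IHs := (IH (m+1) (by omega) (by omega)).1
      have IHt := (IH (m+1) (by omega) (by omega)).2
      have hend : sCol (m+2) (m+2) = m+2 := by
        rw [sCol_succ m (m+2) (by omega) (by omega)]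
        have e : m + 3 - (m+2) = 1 := by omega
        rw [e, tRow_one (m+1) (by omega)]
      constructor
      · intro c h1 h2
        rcases eq_or_ne c 1 with rfl | hc1
        · have e : m + 2 + 1 - 1 = m + 2 := by omega
          rw [e, sCol_col1, hend]
          omega
        · rcases eq_or_ne c (m+2) with rfl | hc2
          · have e : m + 2 + 1 - (m+2) = 1 := by omega
            rw [e, sCol_col1, hend]
          · have hc2' : 2 ≤ c := by omega
            have hc3 : c ≤ m + 1 := by omega
            have e : m + 2 + 1 - c = m + 3 - c := by omega
            rw [e, sCol_succ m c hc2' (by omega),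
              sCol_succ m (m+3-c) (by omega) (by omega)]
            have e2 : m + 3 - (m + 3 - c) = c := by omega
            rw [e2]
            have := IHt c hc2' hc3
            have e3 : m + 1 + 2 - c = m + 3 - c := by omega
            rw [e3] at this
            omega
      · intro r h1 h2
        have e : m + 2 + 2 - r = m + 4 - r := by omega
        rw [e, tRow_succ m r h1 h2, tRow_succ m (m+4-r) (by omega) (by omega)]
        have e2 : m + 4 - r - 1 = m + 3 - r := by omega
        rw [e2]
        have := IHs (r-1) (by omega) (by omega)
        have e3 : m + 1 + 1 - (r - 1) = m + 3 - r := by omega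
        rw [e3] at this
        omega

lemma sum_min_eq (n k : ℕ) (hk1 : 1 ≤ k) (hk2 : k ≤ n) :
    ∑ j ∈ Finset.Icc 1 n, min j k = ∑ w ∈ Finset.Icc (n+1-k) n, w := by
  have hsplit : Finset.Icc 1 n = Finset.Icc 1 k ∪ Finset.Icc (k+1) n := by
    ext x; simp only [Finset.mem_Icc, Finset.mem_union]; omega
  have hdisj : Disjoint (Finset.Icc 1 k) (Finset.Icc (k+1) n) := by
    rw [Finset.disjoint_left]
    intro a ha hb
    simp only [Finset.mem_Icc] at ha hb
    omega
  rw [hsplit, Finset.sum_union hdisj]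
  have h1 : ∑ j ∈ Finset.Icc 1 k, min j k = ∑ j ∈ Finset.Icc 1 k, j :=
    Finset.sum_congr rfl (fun j hj => by
      simp only [Finset.mem_Icc] at hj; omega)
  have h2 : ∑ j ∈ Finset.Icc (k+1) n, min j k = (n - k) * k := by
    rw [Finset.sum_congr rfl (fun j hj => by
      simp only [Finset.mem_Icc] at hj
      show min j k = k
      omega)]
    rw [Finset.sum_const, smul_eq_mul, Nat.card_Icc]
    congr 1
    omega
  have h3 : ∑ w ∈ Finset.Icc (n+1-k) n, w = ∑ j ∈ Finset.Icc 1 k, (j + (n - k)) := by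
    symm
    apply Finset.sum_nbij' (i := fun j => j + (n - k)) (j := fun w => w - (n - k))
    all_goals intro a ha <;> simp only [Finset.mem_Icc] at * <;> try omega
  rw [h1, h2, h3, Finset.sum_add_distrib, Finset.sum_const, smul_eq_mul, Nat.card_Icc]
  have : k + 1 - 1 = k := by omega
  rw [this, Nat.mul_comm]

/-- `f` is a Latin square of order `n`: on the grid of cells `(r, c)` with `1 ≤ r, c ≤ n`
it takes values in `{1, …, n}`, with distinct values on distinct cells of any one row
and on distinct cells of any one column. -/
def IsLatinSquare (n : ℕ) (f : ℕ × ℕ → ℕ) : Prop :=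
  (∀ r c, 1 ≤ r → r ≤ n → 1 ≤ c → c ≤ n → 1 ≤ f (r, c) ∧ f (r, c) ≤ n) ∧
  (∀ r c₁ c₂, 1 ≤ r → r ≤ n → 1 ≤ c₁ → c₁ ≤ n → 1 ≤ c₂ → c₂ ≤ n → c₁ ≠ c₂ →
    f (r, c₁) ≠ f (r, c₂)) ∧
  (∀ r₁ r₂ c, 1 ≤ r₁ → r₁ ≤ n → 1 ≤ r₂ → r₂ ≤ n → 1 ≤ c → c ≤ n → r₁ ≠ r₂ →
    f (r₁, c) ≠ f (r₂, c))

/-- `f` is a solution of the `n × n` Pulsar puzzle: a Latin square of order `n` such that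
each circled entry equals the number of circled cells carrying that same value. -/
def IsPulsarSolution (n : ℕ) (f : ℕ × ℕ → ℕ) : Prop :=
  IsLatinSquare n f ∧
    ∀ p, Circled n p → f p = Set.ncard {q : ℕ × ℕ | Circled n q ∧ f q = f p}

/-- In any solution of the `n × n` Pulsar puzzle, the top row satisfies the symmetric
sum property: `f (1, i) + f (1, n + 1 - i) = n + 1`. -/
theorem pulsar_top_row_symmetric_sum (n : ℕ) (hn : 1 ≤ n) (f : ℕ × ℕ → ℕ)
    (hf : IsPulsarSolution n f) :
    ∀ i, 1 ≤ i → i ≤ n → f (1, i) + f (1, n + 1 - i) = n + 1 := by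
  classical
  obtain ⟨⟨hLb, hLr, hLc⟩, hP⟩ := hf
  -- ncard as Finset card
  have hncard : ∀ v : ℕ, Set.ncard {q : ℕ × ℕ | Circled n q ∧ f q = v}
      = ((CFin n).filter (fun q => f q = v)).card := by
    intro v
    have hset : {q : ℕ × ℕ | Circled n q ∧ f q = v}
        = ↑((CFin n).filter (fun q => f q = v)) := by
      ext q
      simp only [Set.mem_setOf_eq, Finset.coe_filter, mem_CFin]
    rw [hset, Set.ncard_coe_finset]
  -- top row is a bijection onto Icc 1 n
  have hinj : Set.InjOn (fun c => f (1, c)) (Finset.Icc 1 n : Set ℕ) := by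
    intro a ha b hb hab
    simp only [Finset.coe_Icc, Set.mem_Icc] at ha hb
    by_contra hne
    exact hLr 1 a b (by omega) hn ha.1 ha.2 hb.1 hb.2 hne hab
  have himage : (Finset.Icc 1 n).image (fun c => f (1, c)) = Finset.Icc 1 n := by
    apply Finset.eq_of_subset_of_card_le
    · intro v hv
      simp only [Finset.mem_image, Finset.mem_Icc] at hv ⊢
      obtain ⟨c, hc, rfl⟩ := hv
      exact hLb 1 c (by omega) hn hc.1 hc.2
    · rw [Finset.card_image_of_injOn (by simpa using hinj)]
  -- each value v in [1,n] occurs exactly v times among circled cells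
  have hcount : ∀ v, 1 ≤ v → v ≤ n → ((CFin n).filter (fun q => f q = v)).card = v := by
    intro v hv1 hv2
    have : v ∈ (Finset.Icc 1 n).image (fun c => f (1, c)) := by
      rw [himage]; simp only [Finset.mem_Icc]; omega
    simp only [Finset.mem_image, Finset.mem_Icc] at this
    obtain ⟨c, hc, hfc⟩ := this
    have hcirc : Circled n (1, c) := circled_top n c hc.1 hc.2 hn
    have := hP (1, c) hcirc
    rw [hfc] at this
    rw [hncard v] at this
    omega
  -- column count bounds
  have hsle : ∀ c, 1 ≤ c → c ≤ n → 1 ≤ sCol n c ∧ sCol n c ≤ n := by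
    intro c h1 h2
    constructor
    · rw [sCol]
      refine Finset.card_pos.mpr ⟨(1, c), ?_⟩
      refine Finset.mem_filter.mpr ⟨mem_CFin.mpr (circled_top n c h1 h2 hn), rfl⟩
    · rw [sCol]
      calc ((CFin n).filter (fun p => p.2 = c)).card
          ≤ ((Finset.Icc 1 n) ×ˢ ({c} : Finset ℕ)).card := by
            apply Finset.card_le_card
            rintro ⟨a, b⟩ hq
            simp only [Finset.mem_filter, mem_CFin] at hq
            obtain ⟨hcq, rfl⟩ := hq
            have := circled_mem _ _ _ hcq
            refine Finset.mem_product.mpr ⟨?_, Finset.mem_singleton_self _⟩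
            simp only [Finset.mem_Icc]
            exact ⟨this.1, this.2.1⟩
        _ = n := by simp [Nat.card_Icc]
  -- the key per-column lower bound on f (1, c)
  have hkey : ∀ c₀, 1 ≤ c₀ → c₀ ≤ n → n + 1 ≤ f (1, c₀) + sCol n c₀ := by
    intro c₀ h1 h2
    set k := sCol n c₀ with hk
    obtain ⟨hk1, hk2⟩ := hsle c₀ h1 h2
    set v := n + 1 - k with hv
    have hv1 : 1 ≤ v := by omega
    have hv2 : v ≤ n := by omega
    have hvk : n + 1 - v = k := by omega
    set bigF := (CFin n).filter (fun q => v ≤ f q) with hbigF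
    -- total count of circled cells with value ≥ v
    have hA : bigF.card = ∑ w ∈ Finset.Icc v n, w := by
      rw [Finset.card_eq_sum_card_fiberwise (f := fun q => f q) (t := Finset.Icc v n)
        (fun q hq => by
          simp only [Finset.mem_coe, hbigF, Finset.mem_filter, mem_CFin] at hq
          obtain ⟨hcq, hvq⟩ := hq
          obtain ⟨a, b⟩ := q
          have hb := circled_mem _ _ _ hcq
          simp only [Finset.mem_coe, Finset.mem_Icc]
          exact ⟨hvq, (hLb a b hb.1 hb.2.1 hb.2.2.1 hb.2.2.2).2⟩)]
      apply Finset.sum_congr rfl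
      intro w hw
      simp only [Finset.mem_Icc] at hw
      have : bigF.filter (fun q => f q = w) = (CFin n).filter (fun q => f q = w) := by
        ext q
        simp only [hbigF, Finset.mem_filter, mem_CFin]
        constructor
        · rintro ⟨⟨hq1, _⟩, hq3⟩; exact ⟨hq1, hq3⟩
        · rintro ⟨hq1, hq3⟩; exact ⟨⟨hq1, by omega⟩, hq3⟩
      rw [this, hcount w (by omega) hw.2]
    -- fiberwise by column
    have hB : bigF.card = ∑ c ∈ Finset.Icc 1 n, (bigF.filter (fun q => q.2 = c)).card := by
      refine Finset.card_eq_sum_card_fiberwise (f := fun q => (q : ℕ × ℕ).2)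
        (s := bigF) (t := Finset.Icc 1 n) ?_
      intro q hq
      simp only [Finset.mem_coe, hbigF, Finset.mem_filter, mem_CFin] at hq
      obtain ⟨a, b⟩ := q
      have hb := circled_mem _ _ _ hq.1
      simp only [Finset.mem_coe, Finset.mem_Icc]
      exact ⟨hb.2.2.1, hb.2.2.2⟩
    -- per-column upper bound
    have hC : ∀ c ∈ Finset.Icc 1 n,
        (bigF.filter (fun q => q.2 = c)).card ≤ min (sCol n c) k := by
      intro c hc
      simp only [Finset.mem_Icc] at hc
      refine le_min ?_ ?_
      · rw [sCol]
        apply Finset.card_le_card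
        intro q hq
        simp only [hbigF, Finset.mem_filter, mem_CFin] at hq ⊢
        exact ⟨hq.1.1, hq.2⟩
      · rw [← hvk]
        calc (bigF.filter (fun q => q.2 = c)).card ≤ (Finset.Icc v n).card := by
              apply Finset.card_le_card_of_injOn (fun q => f q)
              · intro q hq
                simp only [Finset.mem_coe, hbigF, Finset.mem_filter, mem_CFin] at hq
                obtain ⟨⟨hcq, hvq⟩, _⟩ := hq
                obtain ⟨a, b⟩ := q
                have hb := circled_mem _ _ _ hcq
                simp only [Finset.mem_coe, Finset.mem_Icc]
                exact ⟨hvq, (hLb a b hb.1 hb.2.1 hb.2.2.1 hb.2.2.2).2⟩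
              · rintro ⟨a₁, b₁⟩ hq1 ⟨a₂, b₂⟩ hq2 hfe
                simp only [hbigF, Finset.coe_filter, Set.mem_setOf_eq, Finset.mem_filter,
                  mem_CFin] at hq1 hq2
                obtain ⟨⟨hc1, _⟩, hb1⟩ := hq1
                obtain ⟨⟨hc2, _⟩, hb2⟩ := hq2
                have hm1 := circled_mem _ _ _ hc1
                have hm2 := circled_mem _ _ _ hc2
                have hb12 : b₂ = b₁ := hb2.trans hb1.symm
                by_contra hne
                have hane : a₁ ≠ a₂ := by
                  intro h
                  exact hne (by rw [h, hb12])
                rw [hb12] at hfe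
                exact hLc a₁ a₂ b₁ hm1.1 hm1.2.1 hm2.1 hm2.2.1 hm1.2.2.1 hm1.2.2.2 hane hfe
          _ = n + 1 - v := by rw [Nat.card_Icc]
    -- sums are equal, so equality holds at c₀
    have hD : ∑ c ∈ Finset.Icc 1 n, min (sCol n c) k = ∑ j ∈ Finset.Icc 1 n, min j k :=
      (perm_sums n hn (fun x => min x k)).1
    have hsum_eq : ∑ c ∈ Finset.Icc 1 n, (bigF.filter (fun q => q.2 = c)).card
        = ∑ c ∈ Finset.Icc 1 n, min (sCol n c) k := by
      rw [← hB, hA, hD, sum_min_eq n k hk1 hk2, hv]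
    have hpoint := (Finset.sum_eq_sum_iff_of_le hC).mp hsum_eq c₀
      (by simp only [Finset.mem_Icc]; omega)
    -- the circled cells of column c₀ all have value ≥ v
    have hcol_eq : bigF.filter (fun q => q.2 = c₀) = (CFin n).filter (fun p => p.2 = c₀) := by
      apply Finset.eq_of_subset_of_card_le
      · intro q hq
        simp only [hbigF, Finset.mem_filter, mem_CFin] at hq ⊢
        exact ⟨hq.1.1, hq.2⟩
      · rw [← sCol, hpoint, min_self]
    have hmem : ((1:ℕ), c₀) ∈ bigF.filter (fun q => q.2 = c₀) := by
      rw [hcol_eq]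
      exact Finset.mem_filter.mpr ⟨mem_CFin.mpr (circled_top n c₀ h1 h2 hn), rfl⟩
    simp only [hbigF, Finset.mem_filter, mem_CFin] at hmem
    omega
  -- summing gives equality
  have hsum1 : ∑ c ∈ Finset.Icc 1 n, f (1, c) = ∑ j ∈ Finset.Icc 1 n, j := by
    conv_rhs => rw [← himage]
    rw [Finset.sum_image (fun a ha b hb hab => hinj (by simpa using ha) (by simpa using hb) hab)]
  have hsum2 : ∑ c ∈ Finset.Icc 1 n, sCol n c = ∑ j ∈ Finset.Icc 1 n, j := by
    simpa using (perm_sums n hn id).1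
  have hG : (∑ j ∈ Finset.Icc 1 n, j) * 2 = n * (n + 1) := by
    have hr : Finset.range (n+1) = insert 0 (Finset.Icc 1 n) := by
      ext x; simp only [Finset.mem_range, Finset.mem_insert, Finset.mem_Icc]; omega
    have hG0 := Finset.sum_range_id_mul_two (n+1)
    rw [hr, Finset.sum_insert (by simp), zero_add] at hG0
    have e : n + 1 - 1 = n := rfl
    rw [e] at hG0
    rw [hG0, Nat.mul_comm]
  have heqsum : ∑ c ∈ Finset.Icc 1 n, (n + 1)
      = ∑ c ∈ Finset.Icc 1 n, (f (1, c) + sCol n c) := by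
    symm
    rw [Finset.sum_add_distrib, hsum1, hsum2, Finset.sum_const, smul_eq_mul, Nat.card_Icc]
    have e : n + 1 - 1 = n := rfl
    rw [e, ← hG, mul_two]
  have hfinal := (Finset.sum_eq_sum_iff_of_le (fun c hc => by
    simp only [Finset.mem_Icc] at hc
    exact hkey c hc.1 hc.2)).mp heqsum
  intro i hi1 hi2
  have e1 := hfinal i (by simp only [Finset.mem_Icc]; omega)
  have e2 := hfinal (n+1-i) (by simp only [Finset.mem_Icc]; omega)
  have e3 := (pairing n hn).1 i hi1 hi2
  omega
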